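/- Let A = Aᵀ ∈ ℝ^{n×n}, 1 ≤ s < d(A), and consider the iteration ṽ_{k+1} = Arnoldi projection of v_k with respect to A and s, v_{k+1} = ṽ_{k+1}/‖ṽ_{k+1}‖, with unit initial vector v₀ satisfying d(A,v₀) ≥ s+1. Let τ be the common limit of the nondecreasing sequence {‖ṽ_k‖}. Then each limit point v_* of {v_{2k}} satisfies (Q(A) − τ² I)v_* = 0, where Q(z) = P_s(z; w_*) P_s(z; v_*) is monic of degree 2s, with w_* = P_s(A;v_*)v_*/τ. In particular, s < d(A,v_*) ≤ 2s. -/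

import Mathlib

open Polynomial Filter Topology Matrix

noncomputable section

def mulv {ι : Type*} [Fintype ι] (A : Matrix ι ι ℝ) (v : EuclideanSpace ℝ ι) :
    EuclideanSpace ℝ ι :=
  (WithLp.equiv 2 (ι → ℝ)).symm (A.mulVec ((WithLp.equiv 2 (ι → ℝ)) v))

variable {N : ℕ}

lemma mulv_eq_lin (A : Matrix (Fin N) (Fin N) ℝ) (v : EuclideanSpace ℝ (Fin N)) :
    mulv A v = Matrix.toEuclideanLin A v := rfl

lemma mulv_add (A : Matrix (Fin N) (Fin N) ℝ) (x y : EuclideanSpace ℝ (Fin N)) :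
    mulv A (x + y) = mulv A x + mulv A y := by
  simp [mulv_eq_lin]

lemma mulv_sub (A : Matrix (Fin N) (Fin N) ℝ) (x y : EuclideanSpace ℝ (Fin N)) :
    mulv A (x - y) = mulv A x - mulv A y := by
  simp [mulv_eq_lin]

lemma mulv_smul (A : Matrix (Fin N) (Fin N) ℝ) (c : ℝ) (x : EuclideanSpace ℝ (Fin N)) :
    mulv A (c • x) = c • mulv A x := by
  simp [mulv_eq_lin]

lemma mulv_mul (A B : Matrix (Fin N) (Fin N) ℝ) (x : EuclideanSpace ℝ (Fin N)) :
    mulv (A * B) x = mulv A (mulv B x) := by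
  simp [mulv, Matrix.mulVec_mulVec]

lemma mulv_one (x : EuclideanSpace ℝ (Fin N)) : mulv (1 : Matrix (Fin N) (Fin N) ℝ) x = x := by
  simp [mulv]

lemma mulv_smul_mat (A : Matrix (Fin N) (Fin N) ℝ) (c : ℝ) (x : EuclideanSpace ℝ (Fin N)) :
    mulv (c • A) x = c • mulv A x := by
  simp [mulv, Matrix.smul_mulVec]

lemma mulv_add_mat (A B : Matrix (Fin N) (Fin N) ℝ) (x : EuclideanSpace ℝ (Fin N)) :
    mulv (A + B) x = mulv A x + mulv B x := by
  simp [mulv, Matrix.add_mulVec]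

lemma mulv_sum {α : Type*} (t : Finset α) (f : α → Matrix (Fin N) (Fin N) ℝ)
    (x : EuclideanSpace ℝ (Fin N)) :
    mulv (∑ i ∈ t, f i) x = ∑ i ∈ t, mulv (f i) x := by
  induction t using Finset.cons_induction with
  | empty => simp [mulv]
  | cons a t ha ih => simp [Finset.sum_cons, mulv_add_mat, ih]

lemma mulv_continuous (A : Matrix (Fin N) (Fin N) ℝ) : Continuous (mulv A) := by
  have : (mulv A) = (Matrix.toEuclideanLin A : EuclideanSpace ℝ (Fin N) →ₗ[ℝ] _) := rfl
  rw [this]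
  exact LinearMap.continuous_of_finiteDimensional _

lemma mulv_algebraMap (c : ℝ) (x : EuclideanSpace ℝ (Fin N)) :
    mulv (algebraMap ℝ (Matrix (Fin N) (Fin N) ℝ) c) x = c • x := by
  rw [Algebra.algebraMap_eq_smul_one, mulv_smul_mat, mulv_one]

lemma isSymm_aeval {A : Matrix (Fin N) (Fin N) ℝ} (hA : A.IsSymm) (p : ℝ[X]) :
    (aeval A p).IsSymm := by
  rw [Polynomial.aeval_eq_sum_range]
  unfold Matrix.IsSymm
  rw [Matrix.transpose_sum]
  refine Finset.sum_congr rfl fun i _ => ?_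
  rw [Matrix.transpose_smul, Matrix.transpose_pow, hA]

lemma inner_mulv_symm {A : Matrix (Fin N) (Fin N) ℝ} (hA : A.IsSymm)
    (x y : EuclideanSpace ℝ (Fin N)) :
    inner ℝ (mulv A x) y = (inner ℝ x (mulv A y) : ℝ) := by
  have hH : A.IsHermitian := by
    unfold Matrix.IsHermitian
    rw [Matrix.conjTranspose]
    ext i j
    simpa using congrFun (congrFun hA.eq i) j
  have := (Matrix.isHermitian_iff_isSymmetric.mp hH) x y
  simpa [mulv_eq_lin] using this

lemma mulv_sub_mat (A B : Matrix (Fin N) (Fin N) ℝ) (x : EuclideanSpace ℝ (Fin N)) :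
    mulv (A - B) x = mulv A x - mulv B x := by
  simp [mulv, Matrix.sub_mulVec]

lemma mulv_zero (A : Matrix (Fin N) (Fin N) ℝ) : mulv A (0 : EuclideanSpace ℝ (Fin N)) = 0 := by
  simp [mulv_eq_lin]
def Krylov {ι : Type*} [Fintype ι] [DecidableEq ι] (A : Matrix ι ι ℝ) (s : ℕ) (v : EuclideanSpace ℝ ι) :
    Submodule ℝ (EuclideanSpace ℝ ι) :=
  Submodule.span ℝ (Set.range fun i : Fin s => mulv (A ^ (i : ℕ)) v)

def aproj {ι : Type*} [Fintype ι] [DecidableEq ι] (A : Matrix ι ι ℝ) (s : ℕ)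
    (v : EuclideanSpace ℝ ι) : EuclideanSpace ℝ ι :=
  mulv (A ^ s) v - (Submodule.orthogonalProjection (Krylov A s v) (mulv (A ^ s) v) : EuclideanSpace ℝ ι)

def IsArnoldiProj {ι : Type*} [Fintype ι] [DecidableEq ι] (A : Matrix ι ι ℝ) (s : ℕ)
    (v w : EuclideanSpace ℝ ι) : Prop :=
  w - mulv (A ^ s) v ∈ Krylov A s v ∧ ∀ u ∈ Krylov A s v, inner ℝ w u = (0 : ℝ)

variable {N : ℕ} {A : Matrix (Fin N) (Fin N) ℝ} {s : ℕ}

lemma pow_mem_Krylov {i : ℕ} (hi : i < s) (v : EuclideanSpace ℝ (Fin N)) :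
    mulv (A ^ i) v ∈ Krylov A s v :=
  Submodule.subset_span ⟨⟨i, hi⟩, rfl⟩

lemma aeval_mem_Krylov {r : ℝ[X]} (hr : r.natDegree < s) (v : EuclideanSpace ℝ (Fin N)) :
    mulv (aeval A r) v ∈ Krylov A s v := by
  rw [Polynomial.aeval_eq_sum_range, mulv_sum]
  refine Submodule.sum_mem _ fun i hi => ?_
  rw [mulv_smul_mat]
  exact Submodule.smul_mem _ _ (pow_mem_Krylov (lt_of_lt_of_le (Finset.mem_range.mp hi) hr) v)

lemma aproj_orth (v : EuclideanSpace ℝ (Fin N)) {u : EuclideanSpace ℝ (Fin N)}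
    (hu : u ∈ Krylov A s v) : inner ℝ (aproj A s v) u = (0 : ℝ) :=
  Submodule.starProjection_inner_eq_zero _ u hu

/-- Every `IsArnoldiProj` equals `aproj`. -/
lemma IsArnoldiProj.eq_aproj {v w : EuclideanSpace ℝ (Fin N)}
    (h : IsArnoldiProj A s v w) : w = aproj A s v := by
  obtain ⟨h1, h2⟩ := h
  have : (Submodule.orthogonalProjection (Krylov A s v) (mulv (A ^ s) v) : EuclideanSpace ℝ (Fin N))
      = mulv (A ^ s) v - w := by
    refine Submodule.eq_starProjection_of_mem_of_inner_eq_zero ?_ ?_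
    · have := Submodule.neg_mem _ h1
      simpa using this
    · intro u hu
      have : mulv (A ^ s) v - (mulv (A ^ s) v - w) = w := by abel
      rw [this]
      exact h2 u hu
  rw [aproj, this]
  abel

/-- Monic representation of `aproj`. -/
lemma exists_monic_aproj (hs1 : 1 ≤ s) (v : EuclideanSpace ℝ (Fin N)) :
    ∃ q : ℝ[X], q.Monic ∧ q.natDegree = s ∧ mulv (aeval A q) v = aproj A s v := by
  have hmem := (Submodule.orthogonalProjection (Krylov A s v) (mulv (A ^ s) v)).2
  rw [Krylov, Finsupp.mem_span_range_iff_exists_finsupp] at hmem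
  obtain ⟨c, hc⟩ := hmem
  set r : ℝ[X] := ∑ i : Fin s, C (c i) * X ^ (i : ℕ) with hr
  have hrdeg : r.degree < (s : ℕ) := by
    apply lt_of_le_of_lt (Polynomial.degree_sum_le _ _)
    refine (Finset.sup_lt_iff (WithBot.bot_lt_coe (s : ℕ))).mpr fun i _ => ?_
    calc (C (c i) * X ^ (i : ℕ)).degree ≤ ((i : ℕ) : WithBot ℕ) :=
          Polynomial.degree_C_mul_X_pow_le (i : ℕ) (c i)
      _ < ((s : ℕ) : WithBot ℕ) := by exact_mod_cast i.2
  refine ⟨X ^ s - r, Polynomial.monic_X_pow_sub (by exact_mod_cast hrdeg), ?_, ?_⟩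
  · rw [Polynomial.natDegree_sub_eq_left_of_natDegree_lt]
    · exact Polynomial.natDegree_X_pow s
    · rw [Polynomial.natDegree_X_pow]
      rcases eq_or_ne r 0 with h | h
      · simp [h]; omega
      · exact (Polynomial.natDegree_lt_iff_degree_lt h).mpr hrdeg
  · rw [map_sub, mulv_sub_mat, Polynomial.aeval_X_pow, aproj]
    congr 1
    unfold Krylov
    rw [hr, map_sum, mulv_sum, ← hc]
    rw [Finsupp.sum_fintype _ _ (fun i => by simp)]
    refine Finset.sum_congr rfl fun i _ => ?_
    rw [_root_.map_mul, Polynomial.aeval_C, Polynomial.aeval_X_pow, ← Algebra.smul_def, mulv_smul_mat]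

variable {s : ℕ}

/-- Difference of two monic degree-`s` polynomials has `natDegree < s` (for `s ≥ 1`). -/
lemma natDegree_monic_sub_lt {p q : ℝ[X]} (hs1 : 1 ≤ s) (hp : p.Monic) (hpd : p.natDegree = s)
    (hq : q.Monic) (hqd : q.natDegree = s) : (p - q).natDegree < s := by
  rcases eq_or_ne p q with h | h
  · simp [h]; omega
  · have hd : (p - q).degree < (s : ℕ) := by
      have hdq : p.degree = q.degree := by
        rw [Polynomial.degree_eq_natDegree hp.ne_zero, Polynomial.degree_eq_natDegree hq.ne_zero,
          hpd, hqd]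
      have hlc : p.leadingCoeff = q.leadingCoeff := by rw [hp.leadingCoeff, hq.leadingCoeff]
      have := Polynomial.degree_sub_lt hdq hp.ne_zero hlc
      rwa [Polynomial.degree_eq_natDegree hp.ne_zero, hpd] at this
    exact (Polynomial.natDegree_lt_iff_degree_lt (sub_ne_zero.mpr h)).mpr hd

/-- `aproj` is the minimizer. -/
lemma norm_aproj_le {A : Matrix (Fin N) (Fin N) ℝ} (hs1 : 1 ≤ s) {q : ℝ[X]}
    (hq : q.Monic) (hqd : q.natDegree = s) (v : EuclideanSpace ℝ (Fin N)) :
    ‖aproj A s v‖ ≤ ‖mulv (aeval A q) v‖ := by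
  obtain ⟨q0, hq0, hq0d, hq0e⟩ := exists_monic_aproj (A := A) hs1 v
  have hk : mulv (aeval A (q - q0)) v ∈ Krylov A s v :=
    aeval_mem_Krylov (natDegree_monic_sub_lt hs1 hq hqd hq0 hq0d) v
  have hsplit : mulv (aeval A q) v = aproj A s v + mulv (aeval A (q - q0)) v := by
    rw [map_sub, mulv_sub_mat, hq0e]; abel
  rw [hsplit]
  have horth : inner ℝ (aproj A s v) (mulv (aeval A (q - q0)) v) = (0:ℝ) := aproj_orth v hk
  have h2 := norm_add_sq_real (aproj A s v) (mulv (aeval A (q - q0)) v)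
  rw [horth] at h2
  nlinarith [norm_nonneg (aproj A s v + mulv (aeval A (q - q0)) v), norm_nonneg (aproj A s v),
    sq_nonneg ‖mulv (aeval A (q - q0)) v‖]

/-- If `aproj A s v ≠ 0` then no nonzero polynomial of degree ≤ s annihilates `v`. -/
lemma not_annihilate_of_aproj_ne_zero {A : Matrix (Fin N) (Fin N) ℝ} (hs1 : 1 ≤ s)
    {v : EuclideanSpace ℝ (Fin N)} (hv : aproj A s v ≠ 0) {p : ℝ[X]} (hp : p ≠ 0)
    (hpd : p.natDegree ≤ s) : mulv (aeval A p) v ≠ 0 := by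
  intro h0
  have hCne : C p.leadingCoeff⁻¹ ≠ (0 : ℝ[X]) := by
    simp [Polynomial.C_eq_zero, inv_ne_zero, Polynomial.leadingCoeff_ne_zero.mpr hp]
  set m : ℝ[X] := X ^ (s - p.natDegree) * (p * C p.leadingCoeff⁻¹) with hm
  have hmono : m.Monic :=
    (Polynomial.monic_X_pow _).mul (Polynomial.monic_mul_leadingCoeff_inv hp)
  have hmd : m.natDegree = s := by
    rw [hm, Polynomial.natDegree_mul (pow_ne_zero _ Polynomial.X_ne_zero)
        (Polynomial.monic_mul_leadingCoeff_inv hp).ne_zero,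
      Polynomial.natDegree_X_pow, Polynomial.natDegree_mul hp hCne, Polynomial.natDegree_C]
    omega
  have hz : mulv (aeval A m) v = 0 := by
    rw [hm, _root_.map_mul, _root_.map_mul, mulv_mul, mulv_mul, Polynomial.aeval_C,
      mulv_algebraMap, mulv_smul, h0, smul_zero, mulv_zero]
  have hle := norm_aproj_le (A := A) hs1 hmono hmd v
  rw [hz, norm_zero] at hle
  exact hv (norm_le_zero_iff.mp hle)

lemma inner_mulv_poly_symm {A : Matrix (Fin N) (Fin N) ℝ} (hA : A.IsSymm) (p : ℝ[X])
    (x y : EuclideanSpace ℝ (Fin N)) :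
    inner ℝ (mulv (aeval A p) x) y = (inner ℝ x (mulv (aeval A p) y) : ℝ) :=
  inner_mulv_symm (isSymm_aeval hA p) x y

/-- Key identity: `⟪aproj (T v), v⟫ = ‖aproj v‖` for symmetric `A`. -/
lemma inner_aproj_next {A : Matrix (Fin N) (Fin N) ℝ} (hA : A.IsSymm) (hs1 : 1 ≤ s)
    {v : EuclideanSpace ℝ (Fin N)} (hv : aproj A s v ≠ 0) :
    inner ℝ (aproj A s (‖aproj A s v‖⁻¹ • aproj A s v)) v = ‖aproj A s v‖ := by
  set ν := ‖aproj A s v‖ with hν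
  have hν0 : ν ≠ 0 := by simpa [hν] using hv
  set v' := ν⁻¹ • aproj A s v with hv'
  obtain ⟨q, hqm, hqd, hq⟩ := exists_monic_aproj (A := A) hs1 v
  obtain ⟨q', hq'm, hq'd, hq'⟩ := exists_monic_aproj (A := A) hs1 v'
  have h1 : aproj A s v' = ν⁻¹ • mulv (aeval A q') (mulv (aeval A q) v) := by
    rw [← hq', hv', mulv_smul, hq]
  have h2 : mulv (aeval A q') v = mulv (aeval A q) v + mulv (aeval A (q' - q)) v := by
    rw [map_sub, mulv_sub_mat]; abel
  have h3 : inner ℝ (mulv (aeval A q) v) (mulv (aeval A (q' - q)) v) = (0 : ℝ) := by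
    rw [hq]
    exact aproj_orth v (aeval_mem_Krylov (natDegree_monic_sub_lt hs1 hq'm hq'd hqm hqd) v)
  have h4 : inner ℝ (mulv (aeval A q') (mulv (aeval A q) v)) v
      = (inner ℝ (mulv (aeval A q) v) (mulv (aeval A q') v) : ℝ) := by
    rw [← inner_mulv_poly_symm hA q', real_inner_comm]
  rw [h1, real_inner_smul_left, h4, h2, inner_add_right, h3, add_zero,
    real_inner_self_eq_norm_sq, hq, ← hν]
  field_simp

/-- Monotonicity of `‖aproj‖` along the normalized iteration. -/
lemma norm_aproj_mono {A : Matrix (Fin N) (Fin N) ℝ} (hA : A.IsSymm) (hs1 : 1 ≤ s)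
    {v : EuclideanSpace ℝ (Fin N)} (hv1 : ‖v‖ = 1) (hv : aproj A s v ≠ 0) :
    ‖aproj A s v‖ ≤ ‖aproj A s (‖aproj A s v‖⁻¹ • aproj A s v)‖ := by
  have h := inner_aproj_next hA hs1 hv
  calc ‖aproj A s v‖ = inner ℝ (aproj A s (‖aproj A s v‖⁻¹ • aproj A s v)) v := h.symm
    _ ≤ ‖aproj A s (‖aproj A s v‖⁻¹ • aproj A s v)‖ * ‖v‖ := real_inner_le_norm _ _
    _ = ‖aproj A s (‖aproj A s v‖⁻¹ • aproj A s v)‖ := by rw [hv1, mul_one]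

/-- Gram matrix of the Krylov generators. -/
def gram (A : Matrix (Fin N) (Fin N) ℝ) (s : ℕ) (v : EuclideanSpace ℝ (Fin N)) :
    Matrix (Fin s) (Fin s) ℝ :=
  Matrix.of fun i j => (inner ℝ (mulv (A ^ (i : ℕ)) v) (mulv (A ^ (j : ℕ)) v) : ℝ)

def gvec (A : Matrix (Fin N) (Fin N) ℝ) (s : ℕ) (v : EuclideanSpace ℝ (Fin N)) :
    Fin s → ℝ :=
  fun j => (inner ℝ (mulv (A ^ s) v) (mulv (A ^ (j : ℕ)) v) : ℝ)

lemma continuous_gram (A : Matrix (Fin N) (Fin N) ℝ) (s : ℕ) : Continuous (gram A s) :=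
  continuous_matrix fun _ _ => (mulv_continuous _).inner (mulv_continuous _)

lemma continuous_gvec (A : Matrix (Fin N) (Fin N) ℝ) (s : ℕ) : Continuous (gvec A s) :=
  continuous_pi fun _ => (mulv_continuous _).inner (mulv_continuous _)

/-- If `c` solves the normal equations, it gives the orthogonal projection. -/
lemma aproj_eq_solve {A : Matrix (Fin N) (Fin N) ℝ} {s : ℕ} {v : EuclideanSpace ℝ (Fin N)}
    {c : Fin s → ℝ} (hc : gram A s v *ᵥ c = gvec A s v) :
    aproj A s v = mulv (A ^ s) v - ∑ i : Fin s, c i • mulv (A ^ (i : ℕ)) v := by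
  set y : EuclideanSpace ℝ (Fin N) := ∑ i : Fin s, c i • mulv (A ^ (i : ℕ)) v with hy
  have hyK : y ∈ Krylov A s v :=
    Submodule.sum_mem _ fun i _ => Submodule.smul_mem _ _ (pow_mem_Krylov i.2 v)
  have key : ∀ j : Fin s, (inner ℝ (mulv (A ^ s) v - y) (mulv (A ^ (j : ℕ)) v) : ℝ) = 0 := by
    intro j
    have hj := congrFun hc j
    simp only [Matrix.mulVec, dotProduct, _root_.gram, gvec, Matrix.of_apply] at hj
    rw [inner_sub_left, hy, sum_inner]
    simp only [real_inner_smul_left]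
    rw [sub_eq_zero]
    rw [← hj]
    refine Finset.sum_congr rfl fun i _ => ?_
    rw [real_inner_comm]
    ring
  have horth : ∀ w ∈ Krylov A s v, (inner ℝ (mulv (A ^ s) v - y) w : ℝ) = 0 := by
    intro w hw
    induction hw using Submodule.span_induction with
    | mem x hx => obtain ⟨j, rfl⟩ := hx; exact key j
    | zero => simp
    | add x y' hx hy' ihx ihy => rw [inner_add_right, ihx, ihy, add_zero]
    | smul a x hx ih => rw [real_inner_smul_right, ih, mul_zero]
  have : (Submodule.orthogonalProjection (Krylov A s v) (mulv (A ^ s) v) : EuclideanSpace ℝ (Fin N)) = y :=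
    Submodule.eq_starProjection_of_mem_of_inner_eq_zero hyK horth
  rw [aproj, this]

/-- Nondegeneracy implies the Gram determinant is nonzero. -/
lemma det_gram_ne_zero {A : Matrix (Fin N) (Fin N) ℝ} {s : ℕ} (hs1 : 1 ≤ s)
    {z : EuclideanSpace ℝ (Fin N)}
    (hnd : ∀ p : ℝ[X], p ≠ 0 → p.natDegree ≤ s → mulv (aeval A p) z ≠ 0) :
    (gram A s z).det ≠ 0 := by
  intro hdet
  obtain ⟨c, hc0, hc⟩ := Matrix.exists_mulVec_eq_zero_iff.mpr hdet
  set y : EuclideanSpace ℝ (Fin N) := ∑ i : Fin s, c i • mulv (A ^ (i : ℕ)) z with hy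
  have hyy : (inner ℝ y y : ℝ) = 0 := by
    rw [hy, sum_inner]
    refine Finset.sum_eq_zero fun i _ => ?_
    rw [real_inner_smul_left, inner_sum]
    have hi := congrFun hc i
    simp only [Matrix.mulVec, dotProduct, _root_.gram, Matrix.of_apply, Pi.zero_apply] at hi
    simp only [real_inner_smul_right]
    have h2 : ∑ x : Fin s, c x * (inner ℝ (mulv (A ^ (i:ℕ)) z) (mulv (A ^ (x:ℕ)) z) : ℝ) = 0 := by
      rw [← hi]; exact Finset.sum_congr rfl fun j _ => mul_comm _ _
    rw [h2, mul_zero]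
  have hy0 : y = 0 := by rwa [inner_self_eq_zero] at hyy
  obtain ⟨i0, hi0⟩ := Function.ne_iff.mp hc0
  set p : ℝ[X] := ∑ i : Fin s, C (c i) * X ^ (i : ℕ) with hp
  have hpc : p.coeff (i0 : ℕ) = c i0 := by
    rw [hp, Polynomial.finset_sum_coeff]
    simp only [Polynomial.coeff_C_mul, Polynomial.coeff_X_pow]
    rw [Finset.sum_eq_single i0 (fun j _ hji => by
      rw [if_neg (fun h => hji (Fin.val_injective h).symm), mul_zero])
      (fun h => absurd (Finset.mem_univ i0) h)]
    simp
  have hpne : p ≠ 0 := fun h => hi0 (by rw [← hpc, h]; simp)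
  have hpdeg : p.natDegree ≤ s := by
    have hd : p.degree < (s : ℕ) := by
      apply lt_of_le_of_lt (Polynomial.degree_sum_le _ _)
      refine (Finset.sup_lt_iff (WithBot.bot_lt_coe (s : ℕ))).mpr fun i _ => ?_
      calc (C (c i) * X ^ (i : ℕ)).degree ≤ ((i : ℕ) : WithBot ℕ) :=
            Polynomial.degree_C_mul_X_pow_le (i : ℕ) (c i)
        _ < ((s : ℕ) : WithBot ℕ) := by exact_mod_cast i.2
    exact le_of_lt ((Polynomial.natDegree_lt_iff_degree_lt hpne).mpr hd)
  have hpz : mulv (aeval A p) z = 0 := by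
    rw [hp, map_sum, mulv_sum, ← hy0, hy]
    refine Finset.sum_congr rfl fun i _ => ?_
    rw [_root_.map_mul, Polynomial.aeval_C, Polynomial.aeval_X_pow, ← Algebra.smul_def,
      mulv_smul_mat]
  exact hnd p hpne hpdeg hpz

/-- Sequential continuity of `aproj` at nondegenerate points. -/
lemma tendsto_aproj {A : Matrix (Fin N) (Fin N) ℝ} {s : ℕ} {u : ℕ → EuclideanSpace ℝ (Fin N)}
    {z : EuclideanSpace ℝ (Fin N)} (hu : Tendsto u atTop (𝓝 z))
    (hdet : (gram A s z).det ≠ 0) :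
    Tendsto (fun k => aproj A s (u k)) atTop (𝓝 (aproj A s z)) := by
  set c : EuclideanSpace ℝ (Fin N) → Fin s → ℝ :=
    fun w => (gram A s w).det⁻¹ • ((gram A s w).cramer (gvec A s w)) with hcdef
  have hsol : ∀ w : EuclideanSpace ℝ (Fin N), (gram A s w).det ≠ 0 →
      gram A s w *ᵥ c w = gvec A s w := by
    intro w hw
    rw [hcdef]
    simp only
    rw [Matrix.mulVec_smul, Matrix.mulVec_cramer, smul_smul, inv_mul_cancel₀ hw, one_smul]
  set F : EuclideanSpace ℝ (Fin N) → EuclideanSpace ℝ (Fin N) :=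
    fun w => mulv (A ^ s) w - ∑ i : Fin s, c w i • mulv (A ^ (i : ℕ)) w with hFdef
  have hgram : Tendsto (fun k => gram A s (u k)) atTop (𝓝 (gram A s z)) :=
    ((continuous_gram A s).tendsto z).comp hu
  have hdetT : Tendsto (fun k => (gram A s (u k)).det) atTop (𝓝 (gram A s z).det) :=
    ((Continuous.matrix_det continuous_id).tendsto _).comp hgram
  have hcT : Tendsto (fun k => c (u k)) atTop (𝓝 (c z)) := by
    refine Tendsto.smul (hdetT.inv₀ hdet) ?_
    exact ((Continuous.matrix_cramer (continuous_gram A s) (continuous_gvec A s)).tendsto _).comp hu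
  have hFT : Tendsto (fun k => F (u k)) atTop (𝓝 (F z)) := by
    refine Tendsto.sub (((mulv_continuous _).tendsto _).comp hu) ?_
    refine tendsto_finset_sum _ fun i _ => ?_
    exact Tendsto.smul ((tendsto_pi_nhds.mp hcT) i) (((mulv_continuous _).tendsto _).comp hu)
  have hev : ∀ᶠ k in atTop, aproj A s (u k) = F (u k) := by
    filter_upwards [hdetT.eventually_ne hdet] with k hk
    exact aproj_eq_solve (hsol _ hk)
  have hz : aproj A s z = F z := aproj_eq_solve (hsol _ hdet)
  rw [hz]
  exact Tendsto.congr' (Filter.EventuallyEq.symm hev) hFT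

def vgrade {ι : Type*} [Fintype ι] [DecidableEq ι] (A : Matrix ι ι ℝ)
    (v : EuclideanSpace ℝ ι) : ℕ :=
  sInf {d | ∃ p : ℝ[X], p ≠ 0 ∧ p.natDegree = d ∧ mulv (aeval A p) v = 0}

def dmin {ι : Type*} [Fintype ι] [DecidableEq ι] (A : Matrix ι ι ℝ) : ℕ :=
  (minpoly ℝ A).natDegree

def Phi {ι : Type*} [Fintype ι] [DecidableEq ι] (A : Matrix ι ι ℝ) (s : ℕ) : ℝ :=
  sSup {r | ∃ v : EuclideanSpace ℝ ι, ‖v‖ = 1 ∧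
    r = sInf {t | ∃ q : ℝ[X], q.Monic ∧ q.natDegree = s ∧ t = ‖mulv (aeval A q) v‖}}

def opNorm {ι : Type*} [Fintype ι] [DecidableEq ι] (A : Matrix ι ι ℝ) : ℝ :=
  ‖Matrix.toEuclideanCLM (𝕜 := ℝ) A‖

def TA {ι : Type*} [Fintype ι] [DecidableEq ι] (A : Matrix ι ι ℝ) (s : ℕ)
    (v : EuclideanSpace ℝ ι) : EuclideanSpace ℝ ι :=
  ‖aproj A s v‖⁻¹ • aproj A s v

theorem symmetric_limit_degree {n : ℕ} (A : Matrix (Fin n) (Fin n) ℝ)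
    (hA : A.IsSymm) (s : ℕ) (hs1 : 1 ≤ s) (hs2 : s < dmin A)
    (v vt : ℕ → EuclideanSpace ℝ (Fin n))
    (hv0 : ‖v 0‖ = 1) (hg : s + 1 ≤ vgrade A (v 0))
    (hproj : ∀ k, IsArnoldiProj A s (v k) (vt (k + 1)))
    (hnorm : ∀ k, v (k + 1) = ‖vt (k + 1)‖⁻¹ • vt (k + 1))
    (τ : ℝ) (hτ : Tendsto (fun k => ‖vt (k + 1)‖) atTop (𝓝 τ))
    (vstar : EuclideanSpace ℝ (Fin n))
    (hlim : ∃ φ : ℕ → ℕ, StrictMono φ ∧ Tendsto ((fun k => v (2 * k)) ∘ φ) atTop (𝓝 vstar)) :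
    (∃ Q p q : ℝ[X], Q = p * q ∧ p.Monic ∧ p.natDegree = s ∧ q.Monic ∧ q.natDegree = s ∧
      mulv (aeval A q) vstar = aproj A s vstar ∧
      mulv (aeval A p) (τ⁻¹ • aproj A s vstar) = aproj A s (τ⁻¹ • aproj A s vstar) ∧
      mulv (aeval A Q) vstar = (τ ^ 2) • vstar) ∧
    s < vgrade A vstar ∧ vgrade A vstar ≤ 2 * s := by
  obtain ⟨φ, hφ, hφlim⟩ := hlim
  have h1 : ∀ k, vt (k + 1) = aproj A s (v k) := fun k => (hproj k).eq_aproj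
  -- aproj at v 0 is nonzero
  have hap0 : aproj A s (v 0) ≠ 0 := by
    intro h0
    obtain ⟨q, hqm, hqd, hq⟩ := exists_monic_aproj (A := A) hs1 (v 0)
    have : vgrade A (v 0) ≤ s := Nat.sInf_le ⟨q, hqm.ne_zero, hqd, by rw [hq, h0]⟩
    omega
  -- units and nondegeneracy along the iteration
  have key : ∀ k, ‖v k‖ = 1 ∧ aproj A s (v k) ≠ 0 := by
    intro k
    induction k with
    | zero => exact ⟨hv0, hap0⟩
    | succ k ih =>
      have hv1 : v (k + 1) = ‖aproj A s (v k)‖⁻¹ • aproj A s (v k) := by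
        rw [hnorm k, h1 k]
      constructor
      · rw [hv1, norm_smul, norm_inv, norm_norm,
          inv_mul_cancel₀ (norm_ne_zero_iff.mpr ih.2)]
      · intro h0
        have hid := inner_aproj_next hA hs1 ih.2
        rw [← hv1, h0] at hid
        simp only [inner_zero_left] at hid
        exact (norm_ne_zero_iff.mpr ih.2) hid.symm
  have hv1 : ∀ k, v (k + 1) = ‖aproj A s (v k)‖⁻¹ • aproj A s (v k) := fun k => by
    rw [hnorm k, h1 k]
  have hpos : ∀ k, 0 < ‖aproj A s (v k)‖ := fun k => norm_pos_iff.mpr (key k).2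
  have hνeq : ∀ k, ‖vt (k + 1)‖ = ‖aproj A s (v k)‖ := fun k => by rw [h1 k]
  -- monotonicity
  have hmono : Monotone fun k => ‖vt (k + 1)‖ := by
    apply monotone_nat_of_le_succ
    intro k
    rw [hνeq k, hνeq (k + 1), hv1 k]
    exact norm_aproj_mono hA hs1 (key k).1 (key k).2
  have hleτ : ∀ k, ‖vt (k + 1)‖ ≤ τ := fun k => hmono.ge_of_tendsto hτ k
  have hτpos : 0 < τ := lt_of_lt_of_le (by rw [hνeq 0]; exact hpos 0) (hleτ 0)
  -- subsequence tendsto setup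
  have T2φ : Tendsto (fun k => 2 * φ k) atTop atTop :=
    tendsto_atTop_mono (fun k => by omega) hφ.tendsto_atTop
  have T2φ1 : Tendsto (fun k => 2 * φ k + 1) atTop atTop :=
    tendsto_atTop_mono (fun k => by omega) hφ.tendsto_atTop
  have hg1 : Tendsto (fun k => v (2 * φ k)) atTop (𝓝 vstar) := hφlim
  have hν2φ : Tendsto (fun k => ‖aproj A s (v (2 * φ k))‖) atTop (𝓝 τ) := by
    have := hτ.comp T2φ
    simpa [Function.comp_def, hνeq] using this
  have hν2φ1 : Tendsto (fun k => ‖aproj A s (v (2 * φ k + 1))‖) atTop (𝓝 τ) := by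
    have := hτ.comp T2φ1
    simpa [Function.comp_def, hνeq] using this
  -- vstar is a unit vector
  have hunorm : ‖vstar‖ = 1 := by
    have h := hg1.norm
    have heq : (fun k => ‖v (2 * φ k)‖) = fun _ => (1 : ℝ) := funext fun k => (key _).1
    rw [heq] at h
    exact tendsto_nhds_unique h tendsto_const_nhds
  -- monic representation at vstar
  obtain ⟨q, hqm, hqd, hq⟩ := exists_monic_aproj (A := A) hs1 vstar
  -- τ ≤ ‖aproj vstar‖
  have hτle : τ ≤ ‖aproj A s vstar‖ := by
    have h2' : Tendsto (fun k => ‖mulv (aeval A q) (v (2 * φ k))‖) atTop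
        (𝓝 ‖mulv (aeval A q) vstar‖) := (((mulv_continuous _).tendsto _).comp hg1).norm
    have h1' : ∀ k, ‖aproj A s (v (2 * φ k))‖ ≤ ‖mulv (aeval A q) (v (2 * φ k))‖ :=
      fun k => norm_aproj_le hs1 hqm hqd _
    have := le_of_tendsto_of_tendsto' hν2φ h2' h1'
    rwa [hq] at this
  have hapne : aproj A s vstar ≠ 0 :=
    norm_pos_iff.mp (lt_of_lt_of_le hτpos hτle)
  have hndstar : ∀ p : ℝ[X], p ≠ 0 → p.natDegree ≤ s → mulv (aeval A p) vstar ≠ 0 :=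
    fun p hp hpd => not_annihilate_of_aproj_ne_zero hs1 hapne hp hpd
  have hdetstar : (gram A s vstar).det ≠ 0 := det_gram_ne_zero hs1 hndstar
  -- aproj is continuous along the subsequence
  have htend1 : Tendsto (fun k => aproj A s (v (2 * φ k))) atTop (𝓝 (aproj A s vstar)) :=
    tendsto_aproj hg1 hdetstar
  have hfs : ‖aproj A s vstar‖ = τ := tendsto_nhds_unique htend1.norm hν2φ
  -- the intermediate point w
  set w : EuclideanSpace ℝ (Fin n) := τ⁻¹ • aproj A s vstar with hw
  have htend2 : Tendsto (fun k => v (2 * φ k + 1)) atTop (𝓝 w) := by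
    have h := Tendsto.smul (hν2φ.inv₀ hτpos.ne') htend1
    have heq : (fun k => (‖aproj A s (v (2 * φ k))‖)⁻¹ • aproj A s (v (2 * φ k)))
        = fun k => v (2 * φ k + 1) := funext fun k => (hv1 (2 * φ k)).symm
    rw [heq] at h
    exact h
  obtain ⟨p, hpm, hpd, hp⟩ := exists_monic_aproj (A := A) hs1 w
  have hτlew : τ ≤ ‖aproj A s w‖ := by
    have h2' : Tendsto (fun k => ‖mulv (aeval A p) (v (2 * φ k + 1))‖) atTop
        (𝓝 ‖mulv (aeval A p) w‖) := (((mulv_continuous _).tendsto _).comp htend2).norm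
    have h1' : ∀ k, ‖aproj A s (v (2 * φ k + 1))‖ ≤ ‖mulv (aeval A p) (v (2 * φ k + 1))‖ :=
      fun k => norm_aproj_le hs1 hpm hpd _
    have := le_of_tendsto_of_tendsto' hν2φ1 h2' h1'
    rwa [hp] at this
  have hapwne : aproj A s w ≠ 0 := norm_pos_iff.mp (lt_of_lt_of_le hτpos hτlew)
  have hdetw : (gram A s w).det ≠ 0 :=
    det_gram_ne_zero hs1 (fun p' hp' hpd' => not_annihilate_of_aproj_ne_zero hs1 hapwne hp' hpd')
  have htend3 : Tendsto (fun k => aproj A s (v (2 * φ k + 1))) atTop (𝓝 (aproj A s w)) :=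
    tendsto_aproj htend2 hdetw
  have hfw : ‖aproj A s w‖ = τ := tendsto_nhds_unique htend3.norm hν2φ1
  -- the key identity in the limit
  have hid : ∀ k, (inner ℝ (aproj A s (v (2 * φ k + 1))) (v (2 * φ k)) : ℝ)
      = ‖aproj A s (v (2 * φ k))‖ := by
    intro k
    have := inner_aproj_next hA hs1 (key (2 * φ k)).2
    rwa [← hv1 (2 * φ k)] at this
  have hinner : Tendsto (fun k => (inner ℝ (aproj A s (v (2 * φ k + 1))) (v (2 * φ k)) : ℝ))
      atTop (𝓝 (inner ℝ (aproj A s w) vstar : ℝ)) := htend3.inner hg1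
  have hτinner : (inner ℝ (aproj A s w) vstar : ℝ) = τ := by
    have h := hinner
    rw [show (fun k => (inner ℝ (aproj A s (v (2 * φ k + 1))) (v (2 * φ k)) : ℝ))
        = fun k => ‖aproj A s (v (2 * φ k))‖ from funext hid] at h
    exact tendsto_nhds_unique h hν2φ
  -- equality in Cauchy-Schwarz
  have hCS : aproj A s w = τ • vstar := by
    have hcs : (inner ℝ (aproj A s w) vstar : ℝ) = ‖aproj A s w‖ * ‖vstar‖ := by
      rw [hfw, hunorm, mul_one, hτinner]
    have h2 := inner_eq_norm_mul_iff_real.mp hcs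
    rwa [hunorm, one_smul, hfw] at h2
  -- assemble the polynomial equation
  have haq : aproj A s vstar = τ • w := by
    rw [hw, smul_smul, mul_inv_cancel₀ hτpos.ne', one_smul]
  have hQ : mulv (aeval A (p * q)) vstar = (τ ^ 2) • vstar := by
    rw [_root_.map_mul, mulv_mul, hq, haq, mulv_smul, hp, hCS, smul_smul, sq]
  -- the grade bounds
  have hpqd : (p * q).natDegree = 2 * s := by
    rw [Polynomial.natDegree_mul hpm.ne_zero hqm.ne_zero, hpd, hqd]; omega
  have hrne : p * q - C (τ ^ 2) ≠ 0 := by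
    intro h
    have : (p * q).natDegree = 0 := by
      rw [sub_eq_zero.mp h, Polynomial.natDegree_C]
    omega
  have hrd : (p * q - C (τ ^ 2)).natDegree = 2 * s := by
    rw [Polynomial.natDegree_sub_C, hpqd]
  have hrz : mulv (aeval A (p * q - C (τ ^ 2))) vstar = 0 := by
    rw [map_sub, mulv_sub_mat, hQ, Polynomial.aeval_C, mulv_algebraMap, sub_self]
  have hmem2s : (2 * s) ∈ {d | ∃ p' : ℝ[X], p' ≠ 0 ∧ p'.natDegree = d ∧
      mulv (aeval A p') vstar = 0} := ⟨p * q - C (τ ^ 2), hrne, hrd, hrz⟩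
  refine ⟨⟨p * q, p, q, rfl, hpm, hpd, hqm, hqd, hq, hp, hQ⟩, ?_, Nat.sInf_le hmem2s⟩
  have hne : {d | ∃ p' : ℝ[X], p' ≠ 0 ∧ p'.natDegree = d ∧
      mulv (aeval A p') vstar = 0}.Nonempty := ⟨2 * s, hmem2s⟩
  have hmem := Nat.sInf_mem hne
  obtain ⟨p', hp'ne, hp'd, hp'z⟩ := hmem
  by_contra hcon
  push_neg at hcon
  exact hndstar p' hp'ne (by rw [hp'd]; exact hcon) hp'z
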